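/- (BPDN special case, T = ∅.) Let y = Ax + w with x supported on N and A_N of full column rank. If ‖A'(y − A_N(A_N'A_N)^{-1}A_N'y)‖_∞ < γ·[1 − max_{ω∉N} ‖(A_N'A_N)^{-1}A_N'A_ω‖₁], then the BPDN problem min_b (1/2)‖y−Ab‖₂² + γ‖b‖₁ has a unique minimizer b̃ supported on N, and ‖b̃ − x‖_∞ ≤ γ‖(A_N'A_N)^{-1}‖_∞ + ‖(A_N'A_N)^{-1}A_N'‖_∞‖w‖_∞. -/

import Mathlib

open Matrix Finset

noncomputable section

variable {n m : ℕ}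

/-- Submatrix of columns of `A` indexed by `S`. -/
def cols (A : Matrix (Fin n) (Fin m) ℝ) (S : Finset (Fin m)) :
    Matrix (Fin n) {j // j ∈ S} ℝ := Matrix.of fun i j => A i j.1

/-- Subvector of `b` on indices in `S`. -/
def subv (b : Fin m → ℝ) (S : Finset (Fin m)) : {j // j ∈ S} → ℝ := fun j => b j.1

/-- `b` is supported on `S`. -/
def suppOn (b : Fin m → ℝ) (S : Finset (Fin m)) : Prop := ∀ j, j ∉ S → b j = 0

def l2v {k : Type*} [Fintype k] (v : k → ℝ) : ℝ := Real.sqrt (∑ i, v i ^ 2)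

def l1v {k : Type*} [Fintype k] (v : k → ℝ) : ℝ := ∑ i, |v i|

def linfv {k : Type*} [Fintype k] (v : k → ℝ) : ℝ := ⨆ i, |v i|

/-- ℓ¹ norm of the subvector of `b` on the complement of `T`. -/
def l1c (b : Fin m → ℝ) (T : Finset (Fin m)) : ℝ := ∑ j ∈ Tᶜ, |b j|

/-- Induced ℓ∞→ℓ∞ operator norm (max absolute row sum). -/
def matInf {k l : Type*} [Fintype k] [Fintype l] (B : Matrix k l ℝ) : ℝ :=
  ⨆ i, ∑ j, |B i j|

/-- Spectral norm (ℓ²→ℓ² operator norm). -/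
def spec {k l : Type*} [Fintype k] [Fintype l] (B : Matrix k l ℝ) : ℝ :=
  sSup ((fun x => l2v (B.mulVec x)) '' {x | l2v x ≤ 1})

/-- The modified-BPDN objective L(b) = (1/2)‖y − Ab‖₂² + γ‖b_{Tᶜ}‖₁. -/
def objL (A : Matrix (Fin n) (Fin m) ℝ) (y : Fin n → ℝ) (γ : ℝ) (T : Finset (Fin m))
    (b : Fin m → ℝ) : ℝ :=
  (1/2) * (∑ i, (y i - A.mulVec b i) ^ 2) + γ * l1c b T

/-- Orthogonal projector M = I − A_T (A_Tᵀ A_T)⁻¹ A_Tᵀ. -/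
def projM (A : Matrix (Fin n) (Fin m) ℝ) (T : Finset (Fin m)) : Matrix (Fin n) (Fin n) ℝ :=
  1 - cols A T * ((cols A T)ᵀ * cols A T)⁻¹ * (cols A T)ᵀ

/-- Least squares coefficients on `S` : (A_Sᵀ A_S)⁻¹ A_Sᵀ y. -/
def lsq (A : Matrix (Fin n) (Fin m) ℝ) (S : Finset (Fin m)) (y : Fin n → ℝ) :
    {j // j ∈ S} → ℝ :=
  ((cols A S)ᵀ * cols A S)⁻¹.mulVec ((cols A S)ᵀ.mulVec y)

/-- Least squares estimate on `S`, as a vector in ℝᵐ supported on `S`. -/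
def lsqFull (A : Matrix (Fin n) (Fin m) ℝ) (S : Finset (Fin m)) (y : Fin n → ℝ) :
    Fin m → ℝ := fun j => if h : j ∈ S then lsq A S y ⟨j, h⟩ else 0

/-- The matrix A_Δᵀ M A_Δ. -/
def schur (A : Matrix (Fin n) (Fin m) ℝ) (T Δ : Finset (Fin m)) :
    Matrix {j // j ∈ Δ} {j // j ∈ Δ} ℝ :=
  (cols A Δ)ᵀ * projM A T * cols A Δ

/-- The matrix (A_Tᵀ A_T)⁻¹ A_Tᵀ A_Δ (A_Δᵀ M A_Δ)⁻¹. -/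
def crossMat (A : Matrix (Fin n) (Fin m) ℝ) (T Δ : Finset (Fin m)) :
    Matrix {j // j ∈ T} {j // j ∈ Δ} ℝ :=
  ((cols A T)ᵀ * cols A T)⁻¹ * ((cols A T)ᵀ * cols A Δ) * (schur A T Δ)⁻¹

/-- The exact-recovery-coefficient quantity ‖(A_Δᵀ M A_Δ)⁻¹ A_Δᵀ M A_ω‖₁. -/
def erc (A : Matrix (Fin n) (Fin m) ℝ) (T Δ : Finset (Fin m)) (ω : Fin m) : ℝ :=
  l1v ((schur A T Δ)⁻¹.mulVec (((cols A Δ)ᵀ * projM A T).mulVec (fun i => A i ω)))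

/-- `δ` is a valid S-restricted isometry constant for `A`. -/
def RIP (A : Matrix (Fin n) (Fin m) ℝ) (S : ℕ) (δ : ℝ) : Prop :=
  0 ≤ δ ∧ ∀ (J : Finset (Fin m)), J.card ≤ S → ∀ x : Fin m → ℝ, suppOn x J →
    (1 - δ) * (∑ i, x i ^ 2) ≤ (∑ i, (A.mulVec x i) ^ 2) ∧
    (∑ i, (A.mulVec x i) ^ 2) ≤ (1 + δ) * (∑ i, x i ^ 2)

/-- `θ` is a valid (S,S')-restricted orthogonality constant for `A`. -/
def ROC (A : Matrix (Fin n) (Fin m) ℝ) (S S' : ℕ) (θ : ℝ) : Prop :=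
  0 ≤ θ ∧ ∀ (J J' : Finset (Fin m)), Disjoint J J' → J.card ≤ S → J'.card ≤ S' →
    ∀ x x' : Fin m → ℝ, suppOn x J → suppOn x' J' →
      |dotProduct (A.mulVec x) (A.mulVec x')| ≤ θ * l2v x * l2v x'

/-- `b` minimizes the modified-BPDN objective over vectors supported on `S`. -/
def IsRestrMin (A : Matrix (Fin n) (Fin m) ℝ) (y : Fin n → ℝ) (γ : ℝ)
    (T S : Finset (Fin m)) (b : Fin m → ℝ) : Prop :=
  suppOn b S ∧ ∀ b', suppOn b' S → objL A y γ T b ≤ objL A y γ T b'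

/-- `g` is a subgradient of `b ↦ ‖b_{Tᶜ}‖₁` at `b`. -/
def IsSubgrad (T : Finset (Fin m)) (b g : Fin m → ℝ) : Prop :=
  (∀ j, j ∈ T → g j = 0) ∧
  ∀ j, j ∉ T → |g j| ≤ 1 ∧ (b j ≠ 0 → g j = Real.sign (b j))


section Stmt12Aux

lemma abs_le_linfv {k : Type*} [Fintype k] (v : k → ℝ) (i : k) : |v i| ≤ linfv v := by
  unfold linfv
  exact le_ciSup (f := fun i => |v i|) (Set.Finite.bddAbove (Set.finite_range _)) i

lemma linfv_nonneg {k : Type*} [Fintype k] (v : k → ℝ) : 0 ≤ linfv v := by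
  rcases isEmpty_or_nonempty k with h | h
  · simp [linfv, Real.iSup_of_isEmpty]
  · exact le_trans (abs_nonneg (v h.some)) (abs_le_linfv v h.some)

lemma linfv_le {k : Type*} [Fintype k] {v : k → ℝ} {c : ℝ} (hc : 0 ≤ c)
    (h : ∀ i, |v i| ≤ c) : linfv v ≤ c := by
  rcases isEmpty_or_nonempty k with h' | h'
  · simpa [linfv, Real.iSup_of_isEmpty] using hc
  · exact ciSup_le h

lemma rowsum_le_matInf {k l : Type*} [Fintype k] [Fintype l] (B : Matrix k l ℝ) (i : k) :
    ∑ j, |B i j| ≤ matInf B := by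
  unfold matInf
  exact le_ciSup (f := fun i => ∑ j, |B i j|) (Set.Finite.bddAbove (Set.finite_range _)) i

lemma matInf_nonneg {k l : Type*} [Fintype k] [Fintype l] (B : Matrix k l ℝ) : 0 ≤ matInf B := by
  rcases isEmpty_or_nonempty k with h | h
  · simp [matInf, Real.iSup_of_isEmpty]
  · exact le_trans (Finset.sum_nonneg fun j _ => abs_nonneg _) (rowsum_le_matInf B h.some)

lemma l1v_nonneg {k : Type*} [Fintype k] (v : k → ℝ) : 0 ≤ l1v v :=
  Finset.sum_nonneg fun j _ => abs_nonneg _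

lemma mulVec_abs_le {k l : Type*} [Fintype k] [Fintype l] (B : Matrix k l ℝ) (v : l → ℝ)
    {c : ℝ} (hc : 0 ≤ c) (hv : ∀ j, |v j| ≤ c) (i : k) :
    |B.mulVec v i| ≤ matInf B * c := by
  have h1 : |B.mulVec v i| ≤ ∑ j, |B i j| * c := by
    simp only [Matrix.mulVec, dotProduct]
    refine le_trans (Finset.abs_sum_le_sum_abs _ _) (Finset.sum_le_sum fun j _ => ?_)
    rw [abs_mul]
    exact mul_le_mul_of_nonneg_left (hv j) (abs_nonneg _)
  rw [← Finset.sum_mul] at h1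
  exact le_trans h1 (mul_le_mul_of_nonneg_right (rowsum_le_matInf B i) hc)

lemma dot_swap {k l : Type*} [Fintype k] [Fintype l] (M : Matrix k l ℝ) (v : k → ℝ) (w : l → ℝ) :
    ∑ i, v i * M.mulVec w i = ∑ j, Mᵀ.mulVec v j * w j := by
  simp only [Matrix.mulVec, dotProduct, Matrix.transpose_apply, Finset.mul_sum,
    Finset.sum_mul]
  rw [Finset.sum_comm]
  exact Finset.sum_congr rfl fun j _ => Finset.sum_congr rfl fun i _ => by ring

lemma mulVec_suppOn {n m : ℕ} (A : Matrix (Fin n) (Fin m) ℝ) (N : Finset (Fin m))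
    {b : Fin m → ℝ} (hb : suppOn b N) :
    A.mulVec b = (cols A N).mulVec (subv b N) := by
  funext i
  simp only [Matrix.mulVec, dotProduct, cols, subv, Matrix.of_apply]
  rw [Finset.univ_eq_attach, Finset.sum_attach N (fun j => A i j * b j)]
  symm
  apply Finset.sum_subset (Finset.subset_univ N)
  intro j _ hj
  rw [hb j hj, mul_zero]

lemma objL_expand {n m : ℕ} (A : Matrix (Fin n) (Fin m) ℝ) (y : Fin n → ℝ) (γ : ℝ)
    (b p : Fin m → ℝ) :
    objL A y γ ∅ b = objL A y γ ∅ p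
      + (1/2) * ∑ i, (A.mulVec (b - p) i)^2
      - ∑ j, Aᵀ.mulVec (y - A.mulVec p) j * (b j - p j)
      + γ * (∑ j, |b j| - ∑ j, |p j|) := by
  have hd : ∀ i, y i - A.mulVec b i
      = (y i - A.mulVec p i) - A.mulVec (b - p) i := by
    intro i
    rw [Matrix.mulVec_sub]
    simp only [Pi.sub_apply]
    ring
  have h1 : ∑ i, (y i - A.mulVec b i)^2
      = ∑ i, ((y i - A.mulVec p i)^2
          - 2 * ((y - A.mulVec p) i * A.mulVec (b - p) i)
          + (A.mulVec (b - p) i)^2) :=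
    Finset.sum_congr rfl fun i _ => by rw [hd i]; simp only [Pi.sub_apply]; ring
  have h2 := dot_swap A (y - A.mulVec p) (b - p)
  have h3 : ∑ j, Aᵀ.mulVec (y - A.mulVec p) j * (b - p) j
      = ∑ j, Aᵀ.mulVec (y - A.mulVec p) j * (b j - p j) :=
    Finset.sum_congr rfl fun j _ => by rw [Pi.sub_apply]
  rw [h3] at h2
  simp only [Finset.sum_add_distrib, Finset.sum_sub_distrib, ← Finset.mul_sum] at h1
  simp only [objL, l1c, Finset.compl_empty]
  linarith [h1, h2]

lemma onedim_le (c q a γ : ℝ) (hq : 0 ≤ q) (hγ : 0 < γ)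
    (h : ∀ t : ℝ, 0 ≤ -(c * t) + t^2/2 * q + γ * (|a + t| - |a|)) : c ≤ γ := by
  by_contra hc
  push_neg at hc
  set t := (c - γ) / (q + 1) with htdef
  have hq1 : (0:ℝ) < q + 1 := by linarith
  have ht0 : 0 < t := div_pos (by linarith) hq1
  have habs : |a + t| - |a| ≤ t := by
    have h1 := abs_add_le a t
    rw [abs_of_pos ht0] at h1
    linarith
  have h1 := h t
  have h2 : γ * (|a + t| - |a|) ≤ γ * t := mul_le_mul_of_nonneg_left habs hγ.le
  have h3 : t * (c - γ) ≤ t^2 / 2 * q := by nlinarith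
  have ht1 : t * (q + 1) = c - γ := by
    rw [htdef]
    field_simp
  nlinarith [mul_pos ht0 ht0, mul_nonneg (mul_pos ht0 ht0).le hq]

lemma onedim_reflect (c q a γ : ℝ)
    (h : ∀ t : ℝ, 0 ≤ -(c * t) + t^2/2 * q + γ * (|a + t| - |a|)) :
    ∀ t : ℝ, 0 ≤ -((-c) * t) + t^2/2 * q + γ * (|(-a) + t| - |(-a)|) := by
  intro t
  have h1 := h (-t)
  have e1 : |(-a) + t| = |a + -t| := by
    rw [← abs_neg (a + -t)]
    congr 1
    ring
  have e3 : (-t)^2 = t^2 := by ring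
  rw [e3] at h1
  rw [e1, abs_neg a]
  linarith [h1]

lemma onedim_abs (c q a γ : ℝ) (hq : 0 ≤ q) (hγ : 0 < γ)
    (h : ∀ t : ℝ, 0 ≤ -(c * t) + t^2/2 * q + γ * (|a + t| - |a|)) : |c| ≤ γ := by
  refine abs_le.mpr ⟨?_, onedim_le c q a γ hq hγ h⟩
  linarith [onedim_le (-c) q (-a) γ hq hγ (onedim_reflect c q a γ h)]

lemma onedim_eq_pos (c q a γ : ℝ) (hq : 0 ≤ q) (hγ : 0 < γ) (ha : 0 < a)
    (h : ∀ t : ℝ, 0 ≤ -(c * t) + t^2/2 * q + γ * (|a + t| - |a|)) : c = γ := by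
  have key : ∀ ε : ℝ, 0 < ε → ε ≤ a → |c - γ| ≤ ε * q / 2 := by
    intro ε hε hεa
    have e1 : |a + ε| - |a| = ε := by
      rw [abs_of_pos ha, abs_of_pos (by linarith : (0:ℝ) < a + ε)]
      ring
    have e2 : |a + -ε| - |a| = -ε := by
      rw [abs_of_pos ha, abs_of_nonneg (by linarith : (0:ℝ) ≤ a + -ε)]
      ring
    have h1 := h ε
    rw [e1] at h1
    have h2 := h (-ε)
    rw [e2] at h2
    have e3 : (-ε)^2 = ε^2 := by ring
    rw [e3] at h2
    refine abs_le.mpr ⟨?_, ?_⟩ <;> nlinarith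
  by_contra hne
  have hd : 0 < |c - γ| := abs_pos.mpr (sub_ne_zero.mpr hne)
  have hq1 : (0:ℝ) < q + 1 := by linarith
  set ε := min a (|c - γ| / (q + 1)) with hεdef
  have hε0 : 0 < ε := lt_min ha (div_pos hd hq1)
  have h1 := key ε hε0 (min_le_left _ _)
  have h2 : ε ≤ |c - γ| / (q + 1) := min_le_right _ _
  have h3 : ε * (q + 1) ≤ |c - γ| := (le_div_iff₀ hq1).mp h2
  nlinarith [mul_nonneg hε0.le hq]

lemma onedim_sign (c q a γ : ℝ) (hq : 0 ≤ q) (hγ : 0 < γ) (ha : a ≠ 0)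
    (h : ∀ t : ℝ, 0 ≤ -(c * t) + t^2/2 * q + γ * (|a + t| - |a|)) :
    c = γ * Real.sign a := by
  rcases ha.lt_or_gt with hneg | hpos
  · rw [Real.sign_of_neg hneg]
    have := onedim_eq_pos (-c) q (-a) γ hq hγ (by linarith) (onedim_reflect c q a γ h)
    linarith
  · rw [Real.sign_of_pos hpos, mul_one]
    exact onedim_eq_pos c q a γ hq hγ hpos h

lemma exists_restr_min {n m : ℕ} (A : Matrix (Fin n) (Fin m) ℝ) (y : Fin n → ℝ)
    {γ : ℝ} (hγ : 0 < γ) (N : Finset (Fin m)) :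
    ∃ p : Fin m → ℝ, suppOn p N ∧ ∀ b, suppOn b N → objL A y γ ∅ p ≤ objL A y γ ∅ b := by
  set f : (Fin m → ℝ) → ℝ := objL A y γ ∅ with hf
  have hcont : Continuous f := by
    simp only [hf, objL, l1c]
    apply Continuous.add
    · apply continuous_const.mul
      apply continuous_finset_sum
      intro i _
      have hmv : Continuous fun b : Fin m → ℝ => A.mulVec b i := by
        simp only [Matrix.mulVec, dotProduct]
        exact continuous_finset_sum _ fun j _ => continuous_const.mul (continuous_apply j)
      exact (continuous_const.sub hmv).pow 2
    · exact continuous_const.mul (continuous_finset_sum _ fun j _ => (continuous_apply j).abs)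
  have hlb : ∀ b : Fin m → ℝ, γ * ‖b‖ ≤ f b := by
    intro b
    have h1 : ‖b‖ ≤ ∑ j, |b j| := by
      refine (pi_norm_le_iff_of_nonneg (Finset.sum_nonneg fun j _ => abs_nonneg _)).mpr fun j => ?_
      rw [Real.norm_eq_abs]
      exact Finset.single_le_sum (fun k _ => abs_nonneg (b k)) (Finset.mem_univ j)
    have h2 : 0 ≤ (1/2 : ℝ) * ∑ i, (y i - A.mulVec b i)^2 := by positivity
    have h3 : γ * ‖b‖ ≤ γ * ∑ j, |b j| := mul_le_mul_of_nonneg_left h1 hγ.le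
    simp only [hf, objL, l1c, Finset.compl_empty]
    linarith
  have hf0 : 0 ≤ f 0 := by
    have := hlb 0
    simpa using this
  set R := f 0 / γ + 1 with hR
  have hR0 : 0 ≤ R := by
    have := div_nonneg hf0 hγ.le
    rw [hR]; linarith
  set C : Set (Fin m → ℝ) := {b | suppOn b N} ∩ Metric.closedBall 0 R with hC
  have hKclosed : IsClosed {b : Fin m → ℝ | suppOn b N} := by
    have he : {b : Fin m → ℝ | suppOn b N}
        = ⋂ (j : Fin m) (_ : j ∉ N), (fun b : Fin m → ℝ => b j) ⁻¹' {0} := by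
      ext b
      simp [suppOn]
    rw [he]
    exact isClosed_iInter fun j => isClosed_iInter fun _ =>
      isClosed_singleton.preimage (continuous_apply j)
  have hCcomp : IsCompact C :=
    IsCompact.of_isClosed_subset (isCompact_closedBall 0 R)
      (hKclosed.inter Metric.isClosed_closedBall) Set.inter_subset_right
  have h0C : (0 : Fin m → ℝ) ∈ C := ⟨fun j _ => rfl, by simpa [Metric.mem_closedBall] using hR0⟩
  obtain ⟨p, hpC, hpmin⟩ := hCcomp.exists_isMinOn ⟨0, h0C⟩ hcont.continuousOn
  rw [isMinOn_iff] at hpmin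
  refine ⟨p, hpC.1, fun b hb => ?_⟩
  by_cases hball : b ∈ Metric.closedBall 0 R
  · exact hpmin b ⟨hb, hball⟩
  · have hnorm : R < ‖b‖ := by
      simp only [Metric.mem_closedBall, dist_zero_right, not_le] at hball
      exact hball
    have hfp0 : f p ≤ f 0 := hpmin 0 h0C
    have hbig : f 0 < γ * ‖b‖ := by
      calc f 0 = γ * (f 0 / γ) := by field_simp
        _ < γ * R := by
            apply mul_lt_mul_of_pos_left _ hγ
            rw [hR]; linarith
        _ ≤ γ * ‖b‖ := mul_le_mul_of_nonneg_left hnorm.le hγ.le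
    linarith [hlb b]

end Stmt12Aux

/-- BPDN special case (T = ∅), unique minimizer and ℓ∞ bound. -/
theorem stmt12 (n m : ℕ) (A : Matrix (Fin n) (Fin m) ℝ) (N : Finset (Fin m))
    (hrank : IsUnit ((cols A N)ᵀ * cols A N))
    (γ : ℝ) (hγ : 0 < γ) (x : Fin m → ℝ) (hx : suppOn x N)
    (wn : Fin n → ℝ) (y : Fin n → ℝ) (hy : y = A.mulVec x + wn)
    (hcond : ∀ ω, ω ∉ N →
      linfv (Aᵀ.mulVec (y - (cols A N).mulVec (lsq A N y))) <
        γ * (1 - l1v (((cols A N)ᵀ * cols A N)⁻¹.mulVec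
              ((cols A N)ᵀ.mulVec (fun i => A i ω))))) :
    ∃ btil : Fin m → ℝ,
      (∀ b, objL A y γ ∅ btil ≤ objL A y γ ∅ b) ∧
      (∀ b, (∀ b', objL A y γ ∅ b ≤ objL A y γ ∅ b') → b = btil) ∧
      suppOn btil N ∧
      linfv (btil - x) ≤
        γ * matInf (((cols A N)ᵀ * cols A N)⁻¹) +
          matInf (((cols A N)ᵀ * cols A N)⁻¹ * (cols A N)ᵀ) * linfv wn := by
  classical
  obtain ⟨p, hpN, hpmin⟩ := exists_restr_min A y hγ N
  set AN := cols A N with hAN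
  set G := ANᵀ * AN with hG
  set B := G⁻¹ with hB
  have hdet : IsUnit G.det := (Matrix.isUnit_iff_isUnit_det G).mp hrank
  have hBG : B * G = 1 := Matrix.nonsing_inv_mul G hdet
  set cd : Fin m → ℝ := Aᵀ.mulVec (y - A.mulVec p) with hcd
  -- KKT via perturbation
  have hpert : ∀ j ∈ N, ∀ t : ℝ,
      0 ≤ -(cd j * t) + t^2/2 * (∑ i, (A i j)^2) + γ * (|p j + t| - |p j|) := by
    intro j hj t
    have hsupp' : suppOn (Function.update p j (p j + t)) N := by
      intro k hk
      rcases eq_or_ne k j with rfl | hkj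
      · exact absurd hj hk
      · rw [Function.update_of_ne hkj]
        exact hpN k hk
    have hmin := hpmin _ hsupp'
    have hexp := objL_expand A y γ (Function.update p j (p j + t)) p
    have hbp : Function.update p j (p j + t) - p = fun k => if k = j then t else 0 := by
      funext k
      rcases eq_or_ne k j with rfl | hkj
      · simp
      · simp [Function.update_of_ne hkj, hkj]
    have hAv : ∀ i, A.mulVec (Function.update p j (p j + t) - p) i = t * A i j := by
      intro i
      rw [hbp]
      simp only [Matrix.mulVec, dotProduct, mul_ite, mul_zero]
      rw [Finset.sum_ite_eq' Finset.univ j (fun k => A i k * t)]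
      simp [mul_comm]
    have hq1 : ∑ i, (A.mulVec (Function.update p j (p j + t) - p) i)^2
        = t^2 * ∑ i, (A i j)^2 := by
      rw [Finset.mul_sum]
      exact Finset.sum_congr rfl fun i _ => by rw [hAv i]; ring
    have hlin : ∑ k, cd k * (Function.update p j (p j + t) k - p k) = cd j * t := by
      have e : ∀ k, cd k * (Function.update p j (p j + t) k - p k)
          = if k = j then cd k * t else 0 := by
        intro k
        rcases eq_or_ne k j with rfl | hkj
        · simp
        · simp [Function.update_of_ne hkj, hkj]
      rw [Finset.sum_congr rfl fun k _ => e k,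
        Finset.sum_ite_eq' Finset.univ j (fun k => cd k * t)]
      simp
    have habs : ∑ k, |Function.update p j (p j + t) k| - ∑ k, |p k|
        = |p j + t| - |p j| := by
      have e : ∀ k, |Function.update p j (p j + t) k|
          = Function.update (fun k => |p k|) j (|p j + t|) k := by
        intro k
        rcases eq_or_ne k j with rfl | hkj
        · simp
        · simp [Function.update_of_ne hkj]
      rw [Finset.sum_congr rfl fun k _ => e k,
        Finset.sum_update_of_mem (Finset.mem_univ j),
        Finset.sum_eq_sum_sdiff_singleton_add (Finset.mem_univ j) (fun k => |p k|)]
      ring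
    rw [hexp, hq1] at hmin
    have hlin' : ∑ k, Aᵀ.mulVec (y - A.mulVec p) k * (Function.update p j (p j + t) k - p k)
        = cd j * t := by rw [← hcd]; exact hlin
    rw [hlin'] at hmin
    rw [habs] at hmin
    linarith [hmin]
  have hqnn : ∀ j : Fin m, 0 ≤ ∑ i, (A i j)^2 :=
    fun j => Finset.sum_nonneg fun i _ => sq_nonneg _
  have hkkt1 : ∀ j ∈ N, |cd j| ≤ γ :=
    fun j hj => onedim_abs _ _ _ _ (hqnn j) hγ (hpert j hj)
  have hkkt2 : ∀ j ∈ N, p j ≠ 0 → cd j = γ * Real.sign (p j) :=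
    fun j hj h0 => onedim_sign _ _ _ _ (hqnn j) hγ h0 (hpert j hj)
  -- the dual vector g on N
  set g : {j // j ∈ N} → ℝ := fun j => cd j.1 / γ with hg
  have hgabs : ∀ j, |g j| ≤ 1 := by
    intro j
    rw [hg]
    simp only [abs_div, abs_of_pos hγ]
    exact (div_le_one hγ).mpr (hkkt1 j.1 j.2)
  have hcdg : ANᵀ.mulVec (y - A.mulVec p) = γ • g := by
    funext j
    have e1 : (γ • g) j = cd j.1 := by
      simp only [hg, Pi.smul_apply, smul_eq_mul]
      field_simp
    rw [e1, hcd]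
    simp [hAN, cols, Matrix.mulVec, dotProduct, Matrix.transpose_apply]
  have hAp : A.mulVec p = AN.mulVec (subv p N) := mulVec_suppOn A N hpN
  have hGu : G.mulVec (subv p N) = ANᵀ.mulVec y - γ • g := by
    have e1 : ANᵀ.mulVec (y - A.mulVec p)
        = ANᵀ.mulVec y - G.mulVec (subv p N) := by
      rw [Matrix.mulVec_sub, hAp, Matrix.mulVec_mulVec, hG]
    rw [e1] at hcdg
    have := hcdg
    rw [sub_eq_iff_eq_add] at this
    rw [this]
    abel
  have hu : subv p N = lsq A N y - γ • B.mulVec g := by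
    have h1 : B.mulVec (G.mulVec (subv p N)) = subv p N := by
      rw [Matrix.mulVec_mulVec, hBG, Matrix.one_mulVec]
    rw [← h1, hGu, Matrix.mulVec_sub, Matrix.mulVec_smul]
    rfl
  have hrls : (y - A.mulVec p)
      = (y - AN.mulVec (lsq A N y)) + γ • AN.mulVec (B.mulVec g) := by
    rw [hAp, hu, Matrix.mulVec_sub, Matrix.mulVec_smul]
    funext i
    simp only [Pi.add_apply, Pi.sub_apply, Pi.smul_apply, smul_eq_mul]
    ring
  -- strict dual feasibility off N
  have hlt : ∀ ω ∉ N, |cd ω| < γ := by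
    intro ω hω
    set vω := B.mulVec (ANᵀ.mulVec (fun i => A i ω)) with hvω
    have hGsymm : Gᵀ = G := by
      rw [hG, Matrix.transpose_mul, Matrix.transpose_transpose]
    have hBsymm : Bᵀ = B := by
      rw [hB, Matrix.transpose_nonsing_inv, hGsymm]
    have hcdω : cd ω = Aᵀ.mulVec (y - AN.mulVec (lsq A N y)) ω + γ * ∑ j, vω j * g j := by
      have e0 : cd ω = ∑ i, A i ω * (y - A.mulVec p) i := by
        rw [hcd]
        simp [Matrix.mulVec, dotProduct, Matrix.transpose_apply]
      have e0' : Aᵀ.mulVec (y - AN.mulVec (lsq A N y)) ω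
          = ∑ i, A i ω * (y - AN.mulVec (lsq A N y)) i := by
        simp [Matrix.mulVec, dotProduct, Matrix.transpose_apply]
      have e1 : ∑ i, A i ω * (y - A.mulVec p) i
          = ∑ i, A i ω * (y - AN.mulVec (lsq A N y)) i
            + γ * ∑ i, A i ω * (AN.mulVec (B.mulVec g)) i := by
        rw [hrls, Finset.mul_sum, ← Finset.sum_add_distrib]
        exact Finset.sum_congr rfl fun i _ => by
          simp only [Pi.add_apply, Pi.smul_apply, smul_eq_mul]
          ring
      have e2 : ∑ i, A i ω * (AN.mulVec (B.mulVec g)) i = ∑ j, vω j * g j := by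
        rw [dot_swap AN (fun i => A i ω) (B.mulVec g),
          dot_swap B (ANᵀ.mulVec fun i => A i ω) g, hBsymm, ← hvω]
      rw [e0, e1, e2, e0']
    have h1 : |∑ j, vω j * g j| ≤ l1v vω := by
      refine le_trans (Finset.abs_sum_le_sum_abs _ _) ?_
      unfold l1v
      refine Finset.sum_le_sum fun j _ => ?_
      rw [abs_mul]
      exact mul_le_of_le_one_right (abs_nonneg _) (hgabs j)
    have h2 := abs_le_linfv (Aᵀ.mulVec (y - AN.mulVec (lsq A N y))) ω
    have h3 := hcond ω hω
    have h4 : |cd ω| ≤ linfv (Aᵀ.mulVec (y - AN.mulVec (lsq A N y))) + γ * l1v vω := by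
      rw [hcdω]
      refine le_trans (abs_add_le _ _) ?_
      rw [abs_mul, abs_of_pos hγ]
      exact add_le_add h2 (mul_le_mul_of_nonneg_left h1 hγ.le)
    nlinarith [h3, h4]
  -- full dual vector
  set cvec : Fin m → ℝ := fun j => cd j / γ with hcvec
  have hcabs : ∀ j, |cvec j| ≤ 1 := by
    intro j
    rw [hcvec]
    simp only [abs_div, abs_of_pos hγ]
    by_cases hj : j ∈ N
    · exact (div_le_one hγ).mpr (hkkt1 j hj)
    · exact (div_le_one hγ).mpr (hlt j hj).le
  have hclt : ∀ j ∉ N, |cvec j| < 1 := by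
    intro j hj
    rw [hcvec]
    simp only [abs_div, abs_of_pos hγ]
    exact (div_lt_one hγ).mpr (hlt j hj)
  have hcd_eq : ∀ j, cd j = γ * cvec j := by
    intro j
    rw [hcvec]
    field_simp
  have hcsign : ∀ j, cvec j * p j = |p j| := by
    intro j
    by_cases h0 : p j = 0
    · rw [h0]; simp
    by_cases hj : j ∈ N
    · have hs := hkkt2 j hj h0
      have : cvec j = Real.sign (p j) := by
        simp only [hcvec]
        rw [hs]
        field_simp
      rw [this]
      rcases lt_or_gt_of_ne h0 with h | h
      · rw [Real.sign_of_neg h, abs_of_neg h]; ring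
      · rw [Real.sign_of_pos h, abs_of_pos h]; ring
    · exact absurd (hpN j hj) h0
  -- gap identity
  have hgap : ∀ b, objL A y γ ∅ b = objL A y γ ∅ p
      + (1/2) * ∑ i, (A.mulVec (b - p) i)^2
      + γ * ∑ j, (|b j| - cvec j * b j) := by
    intro b
    have hexp := objL_expand A y γ b p
    have hL : ∑ j, Aᵀ.mulVec (y - A.mulVec p) j * (b j - p j)
        = γ * (∑ j, cvec j * b j) - γ * (∑ j, |p j|) := by
      rw [Finset.mul_sum, Finset.mul_sum, ← Finset.sum_sub_distrib]
      refine Finset.sum_congr rfl fun j _ => ?_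
      have : Aᵀ.mulVec (y - A.mulVec p) j = cd j := by rw [hcd]
      rw [this, hcd_eq j, ← hcsign j]
      ring
    have hS : ∑ j, (|b j| - cvec j * b j) = ∑ j, |b j| - ∑ j, cvec j * b j :=
      Finset.sum_sub_distrib ..
    rw [hS]
    linarith [hexp, hL]
  have hterm : ∀ (b : Fin m → ℝ) j, 0 ≤ |b j| - cvec j * b j := by
    intro b j
    have h1 : cvec j * b j ≤ |cvec j| * |b j| := by
      rw [← abs_mul]
      exact le_abs_self _
    have h2 : |cvec j| * |b j| ≤ 1 * |b j| :=
      mul_le_mul_of_nonneg_right (hcabs j) (abs_nonneg _)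
    linarith
  have hglobal : ∀ b, objL A y γ ∅ p ≤ objL A y γ ∅ b := by
    intro b
    rw [hgap b]
    have h1 : 0 ≤ ∑ i, (A.mulVec (b - p) i)^2 :=
      Finset.sum_nonneg fun i _ => sq_nonneg _
    have h2 : 0 ≤ ∑ j, (|b j| - cvec j * b j) :=
      Finset.sum_nonneg fun j _ => hterm b j
    nlinarith [mul_nonneg hγ.le h2]
  -- RHS nonnegativity
  have hRHS : 0 ≤ γ * matInf B + matInf (B * ANᵀ) * linfv wn := by
    have := mul_nonneg hγ.le (matInf_nonneg B)
    have := mul_nonneg (matInf_nonneg (B * ANᵀ)) (linfv_nonneg wn)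
    linarith
  refine ⟨p, hglobal, ?_, hpN, ?_⟩
  · -- uniqueness
    intro b hb
    have heq : objL A y γ ∅ b = objL A y γ ∅ p := le_antisymm (hb p) (hglobal b)
    have hg2 := hgap b
    have h1 : 0 ≤ ∑ i, (A.mulVec (b - p) i)^2 :=
      Finset.sum_nonneg fun i _ => sq_nonneg _
    have h2 : 0 ≤ ∑ j, (|b j| - cvec j * b j) :=
      Finset.sum_nonneg fun j _ => hterm b j
    have hz1 : ∑ i, (A.mulVec (b - p) i)^2 = 0 := by nlinarith [mul_nonneg hγ.le h2]
    have hz2 : ∑ j, (|b j| - cvec j * b j) = 0 := by nlinarith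
    have hz2' : ∀ j, |b j| - cvec j * b j = 0 := fun j =>
      (Finset.sum_eq_zero_iff_of_nonneg (fun j _ => hterm b j)).mp hz2 j (Finset.mem_univ j)
    have hbN : suppOn b N := by
      intro j hj
      by_contra h0
      have h1' := hz2' j
      have h2' : cvec j * b j ≤ |cvec j| * |b j| := by
        rw [← abs_mul]; exact le_abs_self _
      have h3' : |cvec j| * |b j| < 1 * |b j| :=
        mul_lt_mul_of_pos_right (hclt j hj) (abs_pos.mpr h0)
      linarith
    have hAz : A.mulVec (b - p) = 0 := by
      funext i
      have := (Finset.sum_eq_zero_iff_of_nonneg (fun i _ => sq_nonneg _)).mp hz1 i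
        (Finset.mem_univ i)
      have h5 : A.mulVec (b - p) i = 0 := by
        exact (pow_eq_zero_iff (by norm_num : (2:ℕ) ≠ 0)).mp this
      simpa using h5
    have hsub : suppOn (b - p) N := fun j hj => by
      rw [Pi.sub_apply, hbN j hj, hpN j hj, sub_zero]
    have hvz : subv (b - p) N = 0 := by
      have h5 : AN.mulVec (subv (b - p) N) = 0 := by
        rw [← mulVec_suppOn A N hsub, hAz]
      have h6 : G.mulVec (subv (b - p) N) = 0 := by
        rw [hG, ← Matrix.mulVec_mulVec, h5, Matrix.mulVec_zero]
      calc subv (b - p) N = (B * G).mulVec (subv (b - p) N) := by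
            rw [hBG, Matrix.one_mulVec]
        _ = B.mulVec (G.mulVec (subv (b - p) N)) := by rw [Matrix.mulVec_mulVec]
        _ = 0 := by rw [h6, Matrix.mulVec_zero]
    funext j
    by_cases hj : j ∈ N
    · have := congrFun hvz ⟨j, hj⟩
      simp only [subv, Pi.sub_apply, Pi.zero_apply] at this
      linarith
    · rw [hbN j hj, hpN j hj]
  · -- the ℓ∞ bound
    have hAx : A.mulVec x = AN.mulVec (subv x N) := mulVec_suppOn A N hx
    have hlsq : lsq A N y = subv x N + B.mulVec (ANᵀ.mulVec wn) := by
      have e1 : ANᵀ.mulVec y = G.mulVec (subv x N) + ANᵀ.mulVec wn := by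
        rw [hy, Matrix.mulVec_add, hAx, Matrix.mulVec_mulVec, hG]
      have e2 : lsq A N y = B.mulVec (ANᵀ.mulVec y) := rfl
      rw [e2, e1, Matrix.mulVec_add, Matrix.mulVec_mulVec, hBG, Matrix.one_mulVec]
    have hdiff : subv p N - subv x N
        = B.mulVec (ANᵀ.mulVec wn) - γ • B.mulVec g := by
      rw [hu, hlsq]
      abel
    refine linfv_le hRHS fun j => ?_
    rw [Pi.sub_apply]
    by_cases hj : j ∈ N
    · have hdj := congrFun hdiff ⟨j, hj⟩
      simp only [subv, Pi.sub_apply, Pi.smul_apply, smul_eq_mul] at hdj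
      have hb1 : |B.mulVec (ANᵀ.mulVec wn) ⟨j, hj⟩| ≤ matInf (B * ANᵀ) * linfv wn := by
        rw [Matrix.mulVec_mulVec]
        exact mulVec_abs_le _ _ (linfv_nonneg wn) (abs_le_linfv wn) _
      have hb2 : |B.mulVec g ⟨j, hj⟩| ≤ matInf B := by
        have := mulVec_abs_le B g zero_le_one hgabs ⟨j, hj⟩
        simpa using this
      have e : p j - x j = B.mulVec (ANᵀ.mulVec wn) ⟨j, hj⟩ - γ * B.mulVec g ⟨j, hj⟩ := hdj
      rw [e]
      have habs2 : |B.mulVec (ANᵀ.mulVec wn) ⟨j, hj⟩ - γ * B.mulVec g ⟨j, hj⟩|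
          ≤ |B.mulVec (ANᵀ.mulVec wn) ⟨j, hj⟩| + γ * |B.mulVec g ⟨j, hj⟩| := by
        refine le_trans (abs_sub _ _) ?_
        rw [abs_mul, abs_of_pos hγ]
      have := mul_le_mul_of_nonneg_left hb2 hγ.le
      linarith
    · rw [hpN j hj, hx j hj]
      simpa using hRHS
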